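/- Let f_1, ..., f_k ∈ ℝ[x] be polynomials, and suppose that for every pair (i,j) there exist polynomials p_{ij}, φ_i, φ_j with f_i = p_{ij} ∘ φ_i and f_j = p_{ij} ∘ φ_j, where every φ appearing is linear (degree exactly 1). Then there exists a single polynomial p ∈ ℝ[x] and linear polynomials ψ_1, ..., ψ_k such that f_i = p ∘ ψ_i for all i. -/

import Mathlib

open Polynomial

/-- Inverse of a linear polynomial under composition. -/
noncomputable def linv (φ : Polynomial ℝ) : Polynomial ℝ :=
  C (φ.coeff 1)⁻¹ * X + C (-(φ.coeff 0) / φ.coeff 1)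

lemma linv_deg {φ : Polynomial ℝ} (hφ : φ.degree = 1) : (linv φ).degree = 1 := by
  have ha : φ.coeff 1 ≠ 0 := coeff_ne_zero_of_eq_degree hφ
  exact degree_linear (inv_ne_zero ha)

lemma comp_linv {φ : Polynomial ℝ} (hφ : φ.degree = 1) : φ.comp (linv φ) = X := by
  have ha : φ.coeff 1 ≠ 0 := coeff_ne_zero_of_eq_degree hφ
  have hrep : φ = C (φ.coeff 1) * X + C (φ.coeff 0) :=
    eq_X_add_C_of_degree_le_one hφ.le
  nth_rewrite 1 [hrep]
  simp only [linv, add_comp, mul_comp, C_comp, X_comp]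
  rw [mul_add, ← mul_assoc, ← C_mul, ← C_mul, mul_inv_cancel₀ ha, C_1, one_mul]
  have : φ.coeff 1 * (-φ.coeff 0 / φ.coeff 1) = -φ.coeff 0 := by field_simp
  rw [this]
  simp

lemma deg_comp_one {a b : Polynomial ℝ} (ha : a.degree = 1) (hb : b.degree = 1) :
    (a.comp b).degree = 1 := by
  have : (a.comp b).natDegree = 1 := by
    rw [natDegree_comp, natDegree_eq_of_degree_eq_some ha,
      natDegree_eq_of_degree_eq_some hb]; exact one_mul 1
  exact_mod_cast (degree_eq_iff_natDegree_eq_of_pos Nat.one_pos).mpr this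

/-- If every pair `(f_i, f_j)` admits a common outer polynomial `p_{ij}` with linear
inner polynomials, then all the `f_i` admit a single common outer polynomial `p`
with linear inner polynomials. -/
theorem stmt_5 (k : ℕ) (f : Fin k → Polynomial ℝ)
    (h : ∀ i j : Fin k, ∃ p φi φj : Polynomial ℝ,
      φi.degree = 1 ∧ φj.degree = 1 ∧ f i = p.comp φi ∧ f j = p.comp φj) :
    ∃ p : Polynomial ℝ, ∃ ψ : Fin k → Polynomial ℝ,
      ∀ i : Fin k, (ψ i).degree = 1 ∧ f i = p.comp (ψ i) := by
  rcases Nat.eq_zero_or_pos k with hk | hk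
  · subst hk
    exact ⟨0, fun i => X, fun i => i.elim0⟩
  · have h0 := fun j => h ⟨0, hk⟩ j
    choose p φ0 φj hdeg0 hdegj hf0 hfj using h0
    refine ⟨f ⟨0, hk⟩, fun j => (linv (φ0 j)).comp (φj j), fun j => ?_⟩
    dsimp only
    refine ⟨deg_comp_one (linv_deg (hdeg0 j)) (hdegj j), ?_⟩
    rw [hf0 j, comp_assoc, ← comp_assoc (φ0 j), comp_linv (hdeg0 j), X_comp, ← hfj j]
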